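/- Consider the greedy mechanism M_AP that processes tasks in non-increasing order of value and assigns each task to the first (by a fixed agent priority) unsaturated agent among the agents connected to it, if any. Then M_AP is truthful for agent edge-manipulation: for every agent, reporting its full true edge set yields utility at least as large as reporting any nonempty subset of its edges, holding the other agents' reports fixed. -/

import Mathlib

open Classical

/-- An edge of the bipartite graph: a pair (agent, task). -/
abbrev Edge (n m : ℕ) := Fin n × Fin m

variable {n m : ℕ}

/-- Number of tasks assigned to agent `i` in the edge set `μ`. -/
def deg (μ : Finset (Edge n m)) (i : Fin n) : ℕ := (μ.filter (fun e => e.1 = i)).card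

/-- `μ` is a b-matching over the edge set `E'`: it uses only edges of `E'`, each agent `i`
receives at most `b i` tasks, and each task is matched to at most one agent. -/
def IsBMatching (b : Fin n → ℕ) (E' μ : Finset (Edge n m)) : Prop :=
  μ ⊆ E' ∧ (∀ i, deg μ i ≤ b i) ∧ ∀ j : Fin m, (μ.filter (fun e => e.2 = j)).card ≤ 1

/-- Weight of a matching: total value of matched tasks. -/
noncomputable def weight (q : Fin m → ℝ) (μ : Finset (Edge n m)) : ℝ := ∑ e ∈ μ, q e.2

/-- Utility of agent `i`: total value of the tasks matched to `i`. -/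
noncomputable def util (q : Fin m → ℝ) (i : Fin n) (μ : Finset (Edge n m)) : ℝ :=
  ∑ e ∈ μ.filter (fun e => e.1 = i), q e.2

/-- `μ` is a maximum vertex-weighted b-matching over the edge set `E'`. -/
def IsMaxMatching (b : Fin n → ℕ) (q : Fin m → ℝ) (E' μ : Finset (Edge n m)) : Prop :=
  IsBMatching b E' μ ∧ ∀ ν, IsBMatching b E' ν → weight q ν ≤ weight q μ

/-- The edges of `E` incident to agent `i`. -/
def agentEdges (E : Finset (Edge n m)) (i : Fin n) : Finset (Edge n m) :=
  E.filter (fun e => e.1 = i)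

/-- The edge set obtained from `E` when agent `i` reports `S` instead of its true edges. -/
def deviate (E : Finset (Edge n m)) (i : Fin n) (S : Finset (Edge n m)) : Finset (Edge n m) :=
  E.filter (fun e => e.1 ≠ i) ∪ S

/-- A valid report of agent `i`: a nonempty subset of its true incident edges. -/
def ValidReport (E : Finset (Edge n m)) (i : Fin n) (S : Finset (Edge n m)) : Prop :=
  S ⊆ agentEdges E i ∧ S.Nonempty
open Classical in
/-- The tasks sorted in non-increasing order of value (ties broken by index). -/
noncomputable def sortedTasks (m : ℕ) (q : Fin m → ℝ) : List (Fin m) :=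
  List.insertionSort (fun j k => q k ≤ q j) (List.finRange m)

/-- The greedy mechanism `M_AP`: process tasks in non-increasing value order, assigning each
task to the highest-priority unsaturated agent connected to it, if any. -/
noncomputable def MAP (b : Fin n → ℕ) (q : Fin m → ℝ) (E' : Finset (Edge n m)) :
    Finset (Edge n m) :=
  (sortedTasks m q).foldl (fun μ j =>
    match (List.finRange n).find? (fun i => decide ((i, j) ∈ E' ∧ deg μ i < b i)) with
    | some i => insert (i, j) μ
    | none => μ) ∅

/-- `p = [(i₁,j₁),…,(i_L,j_L)]` is an augmenting path from task `j = j₁` with respect to the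
matching `μ` in the graph `E'`: the edges `(i_ℓ, j_ℓ)` are non-matching edges of `E'`, the
edges `(i_ℓ, j_{ℓ+1})` are matching edges, all interior agents are saturated and the final
agent is unsaturated. -/
structure IsAugPathFrom (b : Fin n → ℕ) (E' μ : Finset (Edge n m)) (j : Fin m)
    (p : List (Edge n m)) : Prop where
  ne : p ≠ []
  starts : ∀ e ∈ p.head?, e.2 = j
  mem : ∀ e ∈ p, e ∈ E' ∧ e ∉ μ
  matched : ∀ k, (h : k + 1 < p.length) →
    ((p.get ⟨k, Nat.lt_of_succ_lt h⟩).1, (p.get ⟨k + 1, h⟩).2) ∈ μ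
  satInterior : ∀ k, (h : k + 1 < p.length) →
    b (p.get ⟨k, Nat.lt_of_succ_lt h⟩).1 ≤ deg μ (p.get ⟨k, Nat.lt_of_succ_lt h⟩).1
  unsatLast : ∀ e ∈ p.getLast?, deg μ e.1 < b e.1
  agentsNodup : (p.map Prod.fst).Nodup
  tasksNodup : (p.map Prod.snd).Nodup

/-- The matching edges of an augmenting path. -/
def pathMatched (p : List (Edge n m)) : List (Edge n m) :=
  (p.zip p.tail).map (fun ef => (ef.1.1, ef.2.2))

/-- Flip an augmenting path: remove its matching edges and add its non-matching edges. -/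
def applyPath (μ : Finset (Edge n m)) (p : List (Edge n m)) : Finset (Edge n m) :=
  (μ \ (pathMatched p).toFinset) ∪ p.toFinset

/-- A numeric key realizing the lexicographic order (by vertex indices) on augmenting paths. -/
def pathKey (n m : ℕ) (p : List (Edge n m)) : ℕ :=
  ((p.flatMap fun (e : Edge n m) => [e.1.val + 1, e.2.val + 1]) ++
    List.replicate (2 * n - 2 * p.length) 0).foldl (fun a d => a * (n + m + 2) + d) 0

/-- DFS explores agents in priority order and goes deep first: it returns the lexicographically
least augmenting path. -/
def dfsCost (n m : ℕ) (p : List (Edge n m)) : ℕ := pathKey n m p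

/-- BFS returns a shortest augmenting path, exploring vertices in priority order: it returns
the lexicographically least augmenting path among those of minimum length. -/
def bfsCost (n m : ℕ) (p : List (Edge n m)) : ℕ :=
  p.length * (n + m + 2) ^ (2 * n + 2) + pathKey n m p

/-- Select the cost-minimal augmenting path from task `j`, if an augmenting path exists. -/
noncomputable def selectPath (cost : List (Edge n m) → ℕ) (b : Fin n → ℕ)
    (E' μ : Finset (Edge n m)) (j : Fin m) : Option (List (Edge n m)) :=
  if h : ∃ p, IsAugPathFrom b E' μ j p ∧ ∀ p', IsAugPathFrom b E' μ j p' → cost p ≤ cost p'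
  then some h.choose else none

/-- The augmenting-path algorithm: process tasks in non-increasing value order, at each step
flipping the augmenting path found by the (deterministic) search given by `cost`. -/
noncomputable def runAug (cost : List (Edge n m) → ℕ) (b : Fin n → ℕ) (q : Fin m → ℝ)
    (E' : Finset (Edge n m)) : Finset (Edge n m) :=
  (sortedTasks m q).foldl (fun μ j =>
    match selectPath cost b E' μ j with
    | some p => applyPath μ p
    | none => μ) ∅

/-- The maximum vertex-weighted b-matching mechanism using breadth-first search. -/
noncomputable def MBFS (b : Fin n → ℕ) (q : Fin m → ℝ) (E' : Finset (Edge n m)) :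
    Finset (Edge n m) := runAug (bfsCost n m) b q E'

/-- The maximum vertex-weighted b-matching mechanism using depth-first search. -/
noncomputable def MDFS (b : Fin n → ℕ) (q : Fin m → ℝ) (E' : Finset (Edge n m)) :
    Finset (Edge n m) := runAug (dfsCost n m) b q E'

namespace MAPaux

lemma deg_insert (μ : Finset (Edge n m)) (e : Edge n m) (he : e ∉ μ) (x : Fin n) :
    deg (insert e μ) x = deg μ x + if e.1 = x then 1 else 0 := by
  classical
  unfold deg
  rw [Finset.filter_insert]
  by_cases h : e.1 = x
  · rw [if_pos h, if_pos h,
      Finset.card_insert_of_notMem (fun hh => he (Finset.mem_filter.1 hh).1)]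
  · rw [if_neg h, if_neg h, add_zero]


def indO (z : Option (Fin n)) (a : Fin n) : ℕ := if z = some a then 1 else 0
@[simp] lemma indO_none (a : Fin n) : indO none a = 0 := rfl
@[simp] lemma indO_some (v a : Fin n) : indO (some v) a = if v = a then 1 else 0 := by simp [indO]

lemma find?_first {l : List (Fin n)} (hl : l.Pairwise (· < ·)) {p : Fin n → Bool} {x : Fin n}
    (h : l.find? p = some x) : ∀ y ∈ l, y < x → p y = false := by
  induction l with
  | nil => simp at h
  | cons a t ih =>
    intro y hy hyx
    by_cases hpa : p a
    · rw [List.find?_cons_of_pos hpa] at h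
      cases h
      rcases List.mem_cons.1 hy with rfl | hyt
      · exact absurd hyx (lt_irrefl _)
      · exact absurd ((List.pairwise_cons.1 hl).1 y hyt) (by omega)
    · rw [List.find?_cons_of_neg hpa] at h
      rcases List.mem_cons.1 hy with rfl | hyt
      · simpa using hpa
      · exact ih (List.pairwise_cons.1 hl).2 h y hyt hyx

lemma finRange_find?_some {p : Fin n → Bool} {x : Fin n}
    (h : (List.finRange n).find? p = some x) : p x = true ∧ ∀ y, y < x → p y = false :=
  ⟨List.find?_some h, fun y hy => find?_first (List.pairwise_lt_finRange n) h y (List.mem_finRange y) hy⟩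


lemma find?_eq_some_first {l : List (Fin n)} (hl : l.Pairwise (· < ·)) {p : Fin n → Bool}
    {x : Fin n} (hx : x ∈ l) (hpx : p x = true) (hmin : ∀ y ∈ l, y < x → p y = false) :
    l.find? p = some x := by
  induction l with
  | nil => simp at hx
  | cons a t ih =>
    rcases List.mem_cons.1 hx with rfl | hxt
    · rw [List.find?_cons_of_pos hpx]
    · have hax : a < x := (List.pairwise_cons.1 hl).1 x hxt
      have hpa : p a = false := hmin a (List.mem_cons_self) hax
      rw [List.find?_cons_of_neg (by simp [hpa])]
      exact ih (List.pairwise_cons.1 hl).2 hxt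
        (fun y hy hyx => hmin y (List.mem_cons_of_mem a hy) hyx)

lemma finRange_find?_eq_some {p : Fin n → Bool} {x : Fin n} (hpx : p x = true)
    (hmin : ∀ y, y < x → p y = false) : (List.finRange n).find? p = some x :=
  find?_eq_some_first (List.pairwise_lt_finRange n) (List.mem_finRange x) hpx
    (fun y _ hyx => hmin y hyx)

lemma finRange_find?_none {p : Fin n → Bool}
    (h : (List.finRange n).find? p = none) : ∀ y, p y = false := by
  intro y; simpa using List.find?_eq_none.1 h y (List.mem_finRange y)

lemma token_step (i : Fin n) (b : Fin n → ℕ) (c : Fin n → Prop) (D D' : Fin n → ℕ)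
    (z w : Option (Fin n)) (p p' : Fin n → Bool)
    (hp : ∀ a, p a = true ↔ c a ∧ D a < b a)
    (hp' : ∀ a, p' a = true ↔ c a ∧ D' a < b a)
    (hz : ∀ a, z = some a → i ≤ a) (hw : ∀ a, w = some a → i < a)
    (htok : ∀ a, D' a + indO z a = D a + indO w a) :
    ∃ z' w' : Option (Fin n),
      (∀ a, z' = some a → i ≤ a) ∧ (∀ a, w' = some a → i < a) ∧
      (z' = some i → z = some i) ∧
      (∀ a, D' a + indO ((List.finRange n).find? p') a + indO z' a
          = D a + indO ((List.finRange n).find? p) a + indO w' a) ∧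
      (((List.finRange n).find? p = some i ∧ (List.finRange n).find? p' = some i ∧ z' = z)
      ∨ ((List.finRange n).find? p ≠ some i ∧ (List.finRange n).find? p' = some i ∧
          z = some i ∧ z' ≠ some i)
      ∨ ((List.finRange n).find? p ≠ some i ∧ (List.finRange n).find? p' ≠ some i ∧
          (z = some i → z' = some i))) := by
  have hle : ∀ (o : Option (Fin n)) x, indO o x ≤ 1 := by
    intro o x; unfold indO; split <;> omega
  have mis1 : ∀ a, p a = true → p' a = false → w = some a ∧ D' a = D a + 1 := by
    intro a hpa hp'a
    have h1 := (hp a).1 hpa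
    have h3 : b a ≤ D' a := by
      rcases Nat.lt_or_ge (D' a) (b a) with h | h
      · rw [(hp' a).2 ⟨h1.1, h⟩] at hp'a; cases hp'a
      · exact h
    have ht := htok a
    have hz1 := hle z a; have hw1 := hle w a
    have hwa : w = some a := by
      by_contra hne
      have h0 : indO w a = 0 := by simp [indO, hne]
      omega
    have hw2 : indO w a = 1 := by simp [indO, hwa]
    have hz0 : indO z a = 0 := by
      rcases Nat.eq_zero_or_pos (indO z a) with h | h
      · exact h
      · omega
    exact ⟨hwa, by omega⟩
  have mis2 : ∀ a, p' a = true → p a = false → z = some a ∧ D a = D' a + 1 := by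
    intro a hp'a hpa
    have h1 := (hp' a).1 hp'a
    have h3 : b a ≤ D a := by
      rcases Nat.lt_or_ge (D a) (b a) with h | h
      · rw [(hp a).2 ⟨h1.1, h⟩] at hpa; cases hpa
      · exact h
    have ht := htok a
    have hz1 := hle z a; have hw1 := hle w a
    have hza : z = some a := by
      by_contra hne
      have h0 : indO z a = 0 := by simp [indO, hne]
      omega
    have hz2 : indO z a = 1 := by simp [indO, hza]
    have hw0 : indO w a = 0 := by
      rcases Nat.eq_zero_or_pos (indO w a) with h | h
      · exact h
      · omega
    exact ⟨hza, by omega⟩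
  rcases hα : (List.finRange n).find? p with _ | a <;>
    rcases hα' : (List.finRange n).find? p' with _ | a'
  · -- none, none
    refine ⟨z, w, hz, hw, fun h => h, ?_, Or.inr (Or.inr ⟨by simp, by simp, fun h => h⟩)⟩
    intro x; simpa using htok x
  · -- none, some a'
    have hp'a' := (finRange_find?_some hα').1
    have hpa' : p a' = false := finRange_find?_none hα a'
    obtain ⟨hza', hDa'⟩ := mis2 a' hp'a' hpa'
    refine ⟨none, w, by simp, hw, by simp, ?_, ?_⟩
    · intro x
      have ht := htok x
      rw [hza'] at ht
      simpa using ht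
    · by_cases hai : a' = i
      · subst hai
        exact Or.inr (Or.inl ⟨by simp, rfl, hza', by simp⟩)
      · refine Or.inr (Or.inr ⟨by simp, by simp [hai], fun h => ?_⟩)
        rw [h] at hza'; exact absurd (Option.some.inj hza').symm hai
  · -- some a, none
    have hpa := (finRange_find?_some hα).1
    have hp'a : p' a = false := finRange_find?_none hα' a
    obtain ⟨hwa, hDa⟩ := mis1 a hpa hp'a
    have hia : i < a := hw a hwa
    refine ⟨z, none, hz, by simp, fun h => h, ?_, ?_⟩
    · intro x
      have ht := htok x
      rw [hwa] at ht
      simpa using ht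
    · have h1 : a ≠ i := Fin.ne_of_gt hia
      exact Or.inr (Or.inr ⟨by simp [h1], by simp, fun h => h⟩)
  · -- some a, some a'
    rcases lt_trichotomy a a' with hlt | heq | hgt
    · -- a < a' : a = w, token⁻ moves to a'
      have hpa := (finRange_find?_some hα).1
      have hp'a : p' a = false := (finRange_find?_some hα').2 a hlt
      obtain ⟨hwa, hDa⟩ := mis1 a hpa hp'a
      have hia : i < a := hw a hwa
      have hia' : i < a' := lt_trans hia hlt
      by_cases hza' : z = some a'
      · refine ⟨none, none, by simp, by simp, by simp, ?_, ?_⟩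
        · intro x
          have ht := htok x
          rw [hwa, hza'] at ht
          simp only [indO_some, indO_none] at ht ⊢
          split_ifs at ht ⊢ <;> omega
        · have h1 : a ≠ i := Fin.ne_of_gt hia
          have h2 : a' ≠ i := Fin.ne_of_gt hia'
          refine Or.inr (Or.inr ⟨by simp [h1], by simp [h2], fun h => ?_⟩)
          rw [h] at hza'
          exact absurd (Option.some.inj hza').symm h2
      · refine ⟨z, some a', hz, fun x hx => by cases hx; exact hia', fun h => h, ?_, ?_⟩
        · intro x
          have ht := htok x
          rw [hwa] at ht
          simp only [indO_some, indO_none] at ht ⊢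
          split_ifs at ht ⊢ <;> omega
        · have h1 : a ≠ i := Fin.ne_of_gt hia
          have h2 : a' ≠ i := Fin.ne_of_gt hia'
          exact Or.inr (Or.inr ⟨by simp [h1], by simp [h2], fun h => h⟩)
    · -- a = a'
      subst heq
      refine ⟨z, w, hz, hw, fun h => h, ?_, ?_⟩
      · intro x
        have ht := htok x
        simp only [indO_some, indO_none] at ht ⊢
        split_ifs at ht ⊢ <;> omega
      · by_cases hai : a = i
        · subst hai
          exact Or.inl ⟨rfl, rfl, rfl⟩
        · exact Or.inr (Or.inr ⟨by simp [hai], by simp [hai], fun h => h⟩)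
    · -- a' < a : a' = z (pivotal), token⁺ moves to a (unless a = w)
      have hp'a' := (finRange_find?_some hα').1
      have hpa' : p a' = false := (finRange_find?_some hα).2 a' hgt
      obtain ⟨hza', hDa'⟩ := mis2 a' hp'a' hpa'
      have hia' : i ≤ a' := hz a' hza'
      have hia : i < a := lt_of_le_of_lt hia' hgt
      have hane : a ≠ i := Fin.ne_of_gt hia
      by_cases hwa : w = some a
      · refine ⟨none, none, by simp, by simp, by simp, ?_, ?_⟩
        · intro x
          have ht := htok x
          rw [hwa, hza'] at ht
          simp only [indO_some, indO_none] at ht ⊢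
          split_ifs at ht ⊢ <;> omega
        · by_cases hai : a' = i
          · subst hai
            exact Or.inr (Or.inl ⟨by simp [hane], rfl, hza', by simp⟩)
          · exact Or.inr (Or.inr ⟨by simp [hane], by simp [hai], fun h => by
              rw [h] at hza'; exact absurd (Option.some.inj hza').symm hai⟩)
      · refine ⟨some a, w, fun x hx => by cases hx; exact le_of_lt hia, hw, fun h => by
          cases h; exact absurd rfl hane, ?_, ?_⟩
        · intro x
          have ht := htok x
          rw [hza'] at ht
          simp only [indO_some, indO_none] at ht ⊢
          split_ifs at ht ⊢ <;> omega
        · by_cases hai : a' = i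
          · subst hai
            exact Or.inr (Or.inl ⟨by simp [hane], rfl, hza', by simp [hane]⟩)
          · exact Or.inr (Or.inr ⟨by simp [hane], by simp [hai], fun h => by
              rw [h] at hza'; exact absurd (Option.some.inj hza').symm hai⟩)

def gfind (b : Fin n → ℕ) (E' : Finset (Edge n m)) (μ : Finset (Edge n m)) (j : Fin m) :
    Option (Fin n) :=
  (List.finRange n).find? (fun i => decide ((i, j) ∈ E' ∧ deg μ i < b i))

def gstep (b : Fin n → ℕ) (E' : Finset (Edge n m)) (μ : Finset (Edge n m)) (j : Fin m) :
    Finset (Edge n m) :=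
  match gfind b E' μ j with
  | some i => insert (i, j) μ
  | none => μ

lemma gstep_some {b : Fin n → ℕ} {E' μ : Finset (Edge n m)} {j : Fin m} {a : Fin n}
    (h : gfind b E' μ j = some a) : gstep b E' μ j = insert (a, j) μ := by
  unfold gstep; rw [h]

lemma gstep_none {b : Fin n → ℕ} {E' μ : Finset (Edge n m)} {j : Fin m}
    (h : gfind b E' μ j = none) : gstep b E' μ j = μ := by
  unfold gstep; rw [h]

lemma subset_gstep (b : Fin n → ℕ) (E' μ : Finset (Edge n m)) (j : Fin m) :
    μ ⊆ gstep b E' μ j := by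
  rcases h : gfind b E' μ j with _ | a
  · rw [gstep_none h]
  · rw [gstep_some h]; exact Finset.subset_insert _ _

lemma mem_gstep {b : Fin n → ℕ} {E' μ : Finset (Edge n m)} {j : Fin m} :
    ∀ e ∈ gstep b E' μ j, e ∈ μ ∨ e.2 = j := by
  intro e he
  rcases h : gfind b E' μ j with _ | a
  · rw [gstep_none h] at he; exact Or.inl he
  · rw [gstep_some h] at he
    rcases Finset.mem_insert.1 he with rfl | h2
    · exact Or.inr rfl
    · exact Or.inl h2

lemma deg_gstep {b : Fin n → ℕ} {E' μ : Finset (Edge n m)} {j : Fin m}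
    (hjμ : ∀ a : Fin n, (a, j) ∉ μ) (x : Fin n) :
    deg (gstep b E' μ j) x = deg μ x + indO (gfind b E' μ j) x := by
  rcases h : gfind b E' μ j with _ | a
  · rw [gstep_none h]; simp
  · rw [gstep_some h, deg_insert μ _ (hjμ a)]; simp

lemma filter_gstep_ne {b : Fin n → ℕ} {E' μ : Finset (Edge n m)} {j : Fin m} {i : Fin n}
    (h : gfind b E' μ j ≠ some i) :
    (gstep b E' μ j).filter (fun e => e.1 = i) = μ.filter (fun e => e.1 = i) := by
  rcases ho : gfind b E' μ j with _ | a
  · rw [gstep_none ho]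
  · rw [gstep_some ho, Finset.filter_insert]
    rw [ho] at h
    have : ¬ ((a, j).1 = i) := fun hh => h (by simpa using congrArg some (hh : a = i))
    rw [if_neg this]

lemma filter_gstep_eq {b : Fin n → ℕ} {E' μ : Finset (Edge n m)} {j : Fin m} {i : Fin n}
    (h : gfind b E' μ j = some i) :
    (gstep b E' μ j).filter (fun e => e.1 = i) =
      insert (i, j) (μ.filter (fun e => e.1 = i)) := by
  rw [gstep_some h, Finset.filter_insert, if_pos rfl]

/-- The coupling invariant between the true run (`μ`) and the deviating run (`μ'`). -/
def Coup (b : Fin n → ℕ) (q : Fin m → ℝ) (i : Fin n) (js : Fin m)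
    (μ μ' : Finset (Edge n m)) (rest : List (Fin m)) : Prop :=
  (∀ e ∈ μ, e.2 ∉ rest) ∧ (∀ e ∈ μ', e.2 ∉ rest) ∧
  (μ' = μ ∨
   (∃ w : Option (Fin n), (∀ a, w = some a → i < a) ∧ (i, js) ∈ μ ∧
      μ'.filter (fun e => e.1 = i) = (μ.filter (fun e => e.1 = i)).erase (i, js) ∧
      (∀ a, deg μ' a + indO (some i) a = deg μ a + indO w a) ∧
      (∀ t ∈ rest, q t ≤ q js)) ∨
   (∃ z w : Option (Fin n), (∀ a, z = some a → i < a) ∧ (∀ a, w = some a → i < a) ∧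
      ∃ t1 : Fin m, (i, js) ∈ μ ∧ (i, t1) ∈ μ' ∧ (i, t1) ∉ μ ∧ q t1 ≤ q js ∧
        μ'.filter (fun e => e.1 = i) =
          insert (i, t1) ((μ.filter (fun e => e.1 = i)).erase (i, js)) ∧
        (∀ a, deg μ' a + indO z a = deg μ a + indO w a)))

lemma coup_step (b : Fin n → ℕ) (q : Fin m → ℝ) (i : Fin n) (js : Fin m)
    (E : Finset (Edge n m)) (μ μ' : Finset (Edge n m)) (j : Fin m) (rest : List (Fin m))
    (hjr : j ∉ rest) (hgap : ∀ t ∈ rest, q t ≤ q j)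
    (hc : Coup b q i js μ μ' (j :: rest)) :
    Coup b q i js (gstep b E μ j) (gstep b (E.erase (i, js)) μ' j) rest := by
  classical
  obtain ⟨hTμ, hTμ', hphase⟩ := hc
  have hjμ : ∀ a : Fin n, (a, j) ∉ μ := fun a hm => (hTμ _ hm) (List.mem_cons_self)
  have hjμ' : ∀ a : Fin n, (a, j) ∉ μ' := fun a hm => (hTμ' _ hm) (List.mem_cons_self)
  have hT2 : ∀ e ∈ gstep b E μ j, e.2 ∉ rest := by
    intro e he
    rcases mem_gstep e he with h | h
    · exact fun hr => hTμ e h (List.mem_cons_of_mem _ hr)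
    · rw [h]; exact hjr
  have hT2' : ∀ e ∈ gstep b (E.erase (i, js)) μ' j, e.2 ∉ rest := by
    intro e he
    rcases mem_gstep e he with h | h
    · exact fun hr => hTμ' e h (List.mem_cons_of_mem _ hr)
    · rw [h]; exact hjr
  refine ⟨hT2, hT2', ?_⟩
  rcases hphase with hSame |
      ⟨w, hw, hjs, hfilt, htok, hgapjs⟩ |
      ⟨z, w, hz, hw, t1, hjs, ht1m, ht1n, hq1, hfilt, htok⟩
  · -- phase Same
    subst hSame
    by_cases hjj : j = js
    · subst hjj
      rcases hα : gfind b E μ' j with _ | a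
      · have hα' : gfind b (E.erase (i, j)) μ' j = none := by
          have hnone := finRange_find?_none (p := fun a : Fin n =>
            decide ((a, j) ∈ E ∧ deg μ' a < b a)) hα
          apply List.find?_eq_none.2
          intro x _
          have := hnone x
          simp only [decide_eq_false_iff_not] at this
          simp only [decide_eq_true_eq, Finset.mem_erase]
          tauto
        rw [gstep_none hα, gstep_none hα']
        exact Or.inl rfl
      · have hpa := (finRange_find?_some hα).1
        have hmin := (finRange_find?_some hα).2
        simp only [decide_eq_true_eq] at hpa
        by_cases hai : a = i
        · subst hai
          -- the true run assigns (a, j) = (i, js) to i; the deviating run diverges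
          rcases hα' : gfind b (E.erase (a, j)) μ' j with _ | a1
          · rw [gstep_some hα, gstep_none hα']
            refine Or.inr (Or.inl ⟨none, by simp, Finset.mem_insert_self _ _, ?_, ?_, hgap⟩)
            · rw [Finset.filter_insert, if_pos rfl,
                Finset.erase_insert (fun h => hjμ' a (Finset.mem_filter.1 h).1)]
            · intro x
              rw [deg_insert μ' (a, j) (hjμ' a) x]
              simp only [indO_some, indO_none]
              split_ifs <;> omega
          · have hpa1 := (finRange_find?_some hα').1
            simp only [decide_eq_true_eq, Finset.mem_erase] at hpa1
            have ha1i : a1 ≠ a := fun h => hpa1.1.1 (by rw [h])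
            have hia1 : a < a1 := by
              rcases lt_trichotomy a1 a with h | h | h
              · exfalso
                have := hmin a1 h
                simp only [decide_eq_false_iff_not, not_and] at this
                exact this hpa1.1.2 hpa1.2
              · exact absurd h ha1i
              · exact h
            rw [gstep_some hα, gstep_some hα']
            refine Or.inr (Or.inl ⟨some a1, ?_, Finset.mem_insert_self _ _, ?_, ?_, hgap⟩)
            · intro x hx; cases hx; exact hia1
            · rw [Finset.filter_insert, if_neg (by simpa using ha1i),
                Finset.filter_insert, if_pos rfl,
                Finset.erase_insert (fun h => hjμ' a (Finset.mem_filter.1 h).1)]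
            · intro x
              rw [deg_insert μ' (a, j) (hjμ' a) x, deg_insert μ' (a1, j) (hjμ' a1) x]
              simp only [indO_some, indO_none]
              split_ifs <;> omega
        · -- a ≠ i : the deviating run takes the same decision
          have hα' : gfind b (E.erase (i, j)) μ' j = some a := by
            apply finRange_find?_eq_some
            · simp only [decide_eq_true_eq, Finset.mem_erase]
              exact ⟨⟨fun h => hai (congrArg Prod.fst h), hpa.1⟩, hpa.2⟩
            · intro y hy
              have := hmin y hy
              simp only [decide_eq_false_iff_not, not_and, Finset.mem_erase] at this ⊢
              intro hmem
              exact this hmem.2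
          rw [gstep_some hα, gstep_some hα']
          exact Or.inl rfl
    · -- j ≠ js : identical steps
      have hgg : gfind b (E.erase (i, js)) μ' j = gfind b E μ' j := by
        unfold gfind
        congr 1
        funext a
        exact decide_eq_decide.2 (and_congr_left' (by
          rw [Finset.mem_erase]
          exact ⟨And.right, fun h => ⟨fun hh => hjj (congrArg Prod.snd hh), h⟩⟩))
      have : gstep b (E.erase (i, js)) μ' j = gstep b E μ' j := by
        unfold gstep; rw [hgg]
      rw [this]
      exact Or.inl rfl
  · -- phase Dropped
    have hjsne : js ≠ j := fun h => (hTμ _ hjs) (by rw [h]; exact List.mem_cons_self)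
    have hmemE : ∀ a : Fin n, ((a, j) ∈ E.erase (i, js)) ↔ ((a, j) ∈ E) := by
      intro a
      rw [Finset.mem_erase]
      exact ⟨And.right, fun h => ⟨fun hh => hjsne.symm (congrArg Prod.snd hh), h⟩⟩
    obtain ⟨z', w', hz', hw', hz'i, heq, hbr⟩ :=
      token_step i b (fun a => (a, j) ∈ E) (deg μ) (deg μ') (some i) w
        (fun a => decide ((a, j) ∈ E ∧ deg μ a < b a))
        (fun a => decide ((a, j) ∈ E.erase (i, js) ∧ deg μ' a < b a))
        (fun a => by simp) (fun a => by simp [hmemE a])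
        (fun a ha => le_of_eq (Option.some.inj ha)) hw htok
    have hcv : (List.finRange n).find? (fun a => decide ((a, j) ∈ E ∧ deg μ a < b a))
        = gfind b E μ j := rfl
    have hcv' : (List.finRange n).find?
          (fun a => decide ((a, j) ∈ E.erase (i, js) ∧ deg μ' a < b a))
        = gfind b (E.erase (i, js)) μ' j := rfl
    rw [hcv, hcv'] at hbr
    rw [hcv, hcv'] at heq
    have htok2 : ∀ x, deg (gstep b (E.erase (i, js)) μ' j) x + indO z' x
        = deg (gstep b E μ j) x + indO w' x := by
      intro x
      rw [deg_gstep hjμ x, deg_gstep hjμ' x]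
      have := heq x
      omega
    have hsub : μ ⊆ gstep b E μ j := subset_gstep b E μ j
    rcases hbr with ⟨hfi, hfi', hz'z⟩ | ⟨hfi, hfi', _, hz'ne⟩ | ⟨hfi, hfi', hzz'⟩
    · -- both runs assign j to i : stay Dropped
      refine Or.inr (Or.inl ⟨w', hw', hsub hjs, ?_, ?_,
        fun t ht => hgapjs t (List.mem_cons_of_mem _ ht)⟩)
      · rw [filter_gstep_eq hfi', filter_gstep_eq hfi, hfilt,
          Finset.erase_insert_of_ne (fun h => hjsne.symm (congrArg Prod.snd h))]
      · intro x
        have := htok2 x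
        rwa [hz'z] at this
    · -- pivotal at i : move to Swapped with t1 := j
      have hz'lt : ∀ a, z' = some a → i < a := by
        intro a ha
        rcases lt_or_eq_of_le (hz' a ha) with h | h
        · exact h
        · exact absurd (h ▸ ha) hz'ne
      have hjnotin : (i, j) ∉ gstep b E μ j := by
        intro hmem
        rcases hα : gfind b E μ j with _ | a0
        · rw [gstep_none hα] at hmem; exact hjμ i hmem
        · rw [gstep_some hα] at hmem
          rcases Finset.mem_insert.1 hmem with h | h
          · exact hfi (by rw [hα, congrArg some (congrArg Prod.fst h).symm])
          · exact hjμ i h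
      refine Or.inr (Or.inr ⟨z', w', hz'lt, hw', j, hsub hjs, ?_, hjnotin,
        hgapjs j (List.mem_cons_self), ?_, htok2⟩)
      · rw [gstep_some hfi']; exact Finset.mem_insert_self _ _
      · rw [filter_gstep_eq hfi', filter_gstep_ne hfi, hfilt]
    · -- both runs avoid i : stay Dropped
      have hz'some : z' = some i := hzz' rfl
      refine Or.inr (Or.inl ⟨w', hw', hsub hjs, ?_, ?_,
        fun t ht => hgapjs t (List.mem_cons_of_mem _ ht)⟩)
      · rw [filter_gstep_ne hfi', filter_gstep_ne hfi, hfilt]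
      · intro x
        have := htok2 x
        rwa [hz'some] at this
  · -- phase Swapped
    have hjsne : js ≠ j := fun h => (hTμ _ hjs) (by rw [h]; exact List.mem_cons_self)
    have ht1ne : t1 ≠ j := fun h => (hTμ' _ ht1m) (by rw [h]; exact List.mem_cons_self)
    have hmemE : ∀ a : Fin n, ((a, j) ∈ E.erase (i, js)) ↔ ((a, j) ∈ E) := by
      intro a
      rw [Finset.mem_erase]
      exact ⟨And.right, fun h => ⟨fun hh => hjsne.symm (congrArg Prod.snd hh), h⟩⟩
    obtain ⟨z', w', hz', hw', hz'i, heq, hbr⟩ :=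
      token_step i b (fun a => (a, j) ∈ E) (deg μ) (deg μ') z w
        (fun a => decide ((a, j) ∈ E ∧ deg μ a < b a))
        (fun a => decide ((a, j) ∈ E.erase (i, js) ∧ deg μ' a < b a))
        (fun a => by simp) (fun a => by simp [hmemE a])
        (fun a ha => le_of_lt (hz a ha)) hw htok
    have hcv : (List.finRange n).find? (fun a => decide ((a, j) ∈ E ∧ deg μ a < b a))
        = gfind b E μ j := rfl
    have hcv' : (List.finRange n).find?
          (fun a => decide ((a, j) ∈ E.erase (i, js) ∧ deg μ' a < b a))
        = gfind b (E.erase (i, js)) μ' j := rfl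
    rw [hcv, hcv'] at hbr
    rw [hcv, hcv'] at heq
    have htok2 : ∀ x, deg (gstep b (E.erase (i, js)) μ' j) x + indO z' x
        = deg (gstep b E μ j) x + indO w' x := by
      intro x
      rw [deg_gstep hjμ x, deg_gstep hjμ' x]
      have := heq x
      omega
    have hz'lt : ∀ a, z' = some a → i < a := by
      intro a ha
      rcases lt_or_eq_of_le (hz' a ha) with h | h
      · exact h
      · exact absurd (hz i (hz'i (h ▸ ha))) (lt_irrefl i)
    have hsub : μ ⊆ gstep b E μ j := subset_gstep b E μ j
    have hsub' : μ' ⊆ gstep b (E.erase (i, js)) μ' j := subset_gstep _ _ _ _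
    rcases hbr with ⟨hfi, hfi', hz'z⟩ | ⟨_, _, hzi, _⟩ | ⟨hfi, hfi', _⟩
    · -- both runs assign j to i : stay Swapped
      have ht1notin : (i, t1) ∉ gstep b E μ j := by
        rw [gstep_some hfi]
        intro hmem
        rcases Finset.mem_insert.1 hmem with h | h
        · exact ht1ne (congrArg Prod.snd h)
        · exact ht1n h
      refine Or.inr (Or.inr ⟨z', w', hz'lt, hw', t1, hsub hjs, hsub' ht1m, ht1notin, hq1,
        ?_, htok2⟩)
      rw [filter_gstep_eq hfi', filter_gstep_eq hfi, hfilt,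
        Finset.insert_comm,
        Finset.erase_insert_of_ne (fun h => hjsne.symm (congrArg Prod.snd h))]
    · -- impossible : z has no token at i
      exact absurd (hz i hzi) (lt_irrefl i)
    · -- both runs avoid i : stay Swapped
      have ht1notin : (i, t1) ∉ gstep b E μ j := by
        intro hmem
        rcases mem_gstep _ hmem with h | h
        · exact ht1n h
        · exact ht1ne h
      refine Or.inr (Or.inr ⟨z', w', hz'lt, hw', t1, hsub hjs, hsub' ht1m, ht1notin, hq1,
        ?_, htok2⟩)
      rw [filter_gstep_ne hfi', filter_gstep_ne hfi, hfilt]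


lemma coup_fold (b : Fin n → ℕ) (q : Fin m → ℝ) (i : Fin n) (js : Fin m)
    (E : Finset (Edge n m)) :
    ∀ (rest : List (Fin m)) (μ μ' : Finset (Edge n m)), rest.Nodup →
      rest.Pairwise (fun j k => q k ≤ q j) → Coup b q i js μ μ' rest →
      Coup b q i js (rest.foldl (gstep b E) μ)
        (rest.foldl (gstep b (E.erase (i, js))) μ') [] := by
  intro rest
  induction rest with
  | nil => intro μ μ' _ _ h; exact h
  | cons j t ih =>
    intro μ μ' hnd hpw hc
    simp only [List.foldl_cons]
    exact ih _ _ (List.nodup_cons.1 hnd).2 (List.pairwise_cons.1 hpw).2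
      (coup_step b q i js E μ μ' j t (List.nodup_cons.1 hnd).1
        (List.pairwise_cons.1 hpw).1 hc)

lemma coup_util (b : Fin n → ℕ) (q : Fin m → ℝ) (hq : ∀ j, 0 < q j) (i : Fin n) (js : Fin m)
    (μ μ' : Finset (Edge n m)) (hc : Coup b q i js μ μ' []) :
    util q i μ' ≤ util q i μ := by
  classical
  obtain ⟨-, -, hphase⟩ := hc
  rcases hphase with rfl | ⟨w, _, hjs, hfilt, _, _⟩ |
      ⟨z, w, _, _, t1, hjs, ht1m, ht1n, hq1, hfilt, _⟩
  · exact le_refl _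
  · unfold util
    rw [hfilt]
    have hmem : (i, js) ∈ μ.filter (fun e => e.1 = i) := Finset.mem_filter.2 ⟨hjs, rfl⟩
    have hsum := Finset.sum_erase_add (μ.filter (fun e => e.1 = i)) (fun e => q e.2) hmem
    have hpos := hq js
    simp only at hsum
    linarith
  · unfold util
    have ht1notin : (i, t1) ∉ (μ.filter (fun e => e.1 = i)).erase (i, js) := by
      intro h
      exact ht1n (Finset.mem_filter.1 (Finset.mem_of_mem_erase h)).1
    rw [hfilt, Finset.sum_insert ht1notin]
    have hmem : (i, js) ∈ μ.filter (fun e => e.1 = i) := Finset.mem_filter.2 ⟨hjs, rfl⟩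
    have hsum := Finset.sum_erase_add (μ.filter (fun e => e.1 = i)) (fun e => q e.2) hmem
    simp only at hsum
    linarith

lemma MAP_eq (b : Fin n → ℕ) (q : Fin m → ℝ) (E : Finset (Edge n m)) :
    MAP b q E = (sortedTasks m q).foldl (gstep b E) ∅ := rfl

lemma MAP_erase_le (b : Fin n → ℕ) (q : Fin m → ℝ) (hq : ∀ j, 0 < q j)
    (E : Finset (Edge n m)) (i : Fin n) (js : Fin m) :
    util q i (MAP b q (E.erase (i, js))) ≤ util q i (MAP b q E) := by
  classical
  have hnd : (sortedTasks m q).Nodup :=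
    (List.perm_insertionSort _ _).nodup_iff.2 (List.nodup_finRange m)
  have hpw : (sortedTasks m q).Pairwise (fun j k => q k ≤ q j) := by
    letI : IsTotal (Fin m) (fun j k => q k ≤ q j) := ⟨fun a c => le_total (q c) (q a)⟩
    letI : IsTrans (Fin m) (fun j k => q k ≤ q j) := ⟨fun a c d h h' => le_trans h' h⟩
    exact List.pairwise_insertionSort _ _
  have h0 : Coup b q i js ∅ ∅ (sortedTasks m q) := ⟨by simp, by simp, Or.inl rfl⟩
  have hres := coup_util b q hq i js _ _ (coup_fold b q i js E _ ∅ ∅ hnd hpw h0)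
  rw [MAP_eq, MAP_eq]
  exact hres

lemma MAP_subset_le (b : Fin n → ℕ) (q : Fin m → ℝ) (hq : ∀ j, 0 < q j) (i : Fin n) :
    ∀ (k : ℕ) (E D : Finset (Edge n m)), D ⊆ E → (∀ e ∈ E, e.1 ≠ i → e ∈ D) →
      (E \ D).card = k → util q i (MAP b q D) ≤ util q i (MAP b q E) := by
  intro k
  induction k with
  | zero =>
    intro E D hDE _ hcard
    have h0 : E \ D = ∅ := Finset.card_eq_zero.1 hcard
    have hED : E ⊆ D := fun x hx => by
      by_contra hxD
      exact absurd (Finset.mem_sdiff.2 ⟨hx, hxD⟩) (by simp [h0])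
    rw [Finset.Subset.antisymm hED hDE]
  | succ k ih =>
    intro E D hDE hcomp hcard
    obtain ⟨e, he⟩ := Finset.card_pos.1 (by omega : 0 < (E \ D).card)
    obtain ⟨heE, heD⟩ := Finset.mem_sdiff.1 he
    have hei : e.1 = i := by
      by_contra h
      exact heD (hcomp e heE h)
    have hee : e = (i, e.2) := by
      rw [← hei]
    have step : util q i (MAP b q D) ≤ util q i (MAP b q (insert e D)) := by
      have h1 := MAP_erase_le b q hq (insert e D) i e.2
      rwa [← hee, Finset.erase_insert heD] at h1
    refine le_trans step (ih E (insert e D) (Finset.insert_subset heE hDE)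
      (fun e' he' hne' => Finset.mem_insert_of_mem (hcomp e' he' hne')) ?_)
    rw [Finset.sdiff_insert, Finset.card_erase_of_mem he, hcard]
    omega

end MAPaux

/-- The greedy mechanism `M_AP` is truthful for agent edge-manipulation:
for every agent, reporting its full true edge set yields utility at least as large as
reporting any nonempty subset of its edges, the other agents' reports being fixed. -/
theorem MAP_truthful (n m : ℕ) (b : Fin n → ℕ) (q : Fin m → ℝ) (hq : ∀ j, 0 < q j)
    (E : Finset (Edge n m)) (i : Fin n) (S : Finset (Edge n m)) (hS : ValidReport E i S) :
    util q i (MAP b q (deviate E i S)) ≤ util q i (MAP b q E) := by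
  classical
  obtain ⟨hsub, -⟩ := hS
  have hDE : deviate E i S ⊆ E := by
    apply Finset.union_subset (Finset.filter_subset _ _)
    exact hsub.trans (Finset.filter_subset _ _)
  have hcomp : ∀ e ∈ E, e.1 ≠ i → e ∈ deviate E i S := fun e he h =>
    Finset.mem_union_left _ (Finset.mem_filter.2 ⟨he, h⟩)
  exact MAPaux.MAP_subset_le b q hq i (E \ deviate E i S).card E (deviate E i S) hDE hcomp rfl
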